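/- Suppose X satisfies: every primitive relation has the form ρ₁+⋯+ρ_k = 0 or ρ₁+⋯+ρ_k = ρ' for a ray generator ρ'. If a ray generator ρ of the fan equals a nontrivial nonnegative integer combination of ray generators other than ρ, then ρ is the right-hand side of some primitive relation (i.e., the divisor D corresponding to ρ is exceptional). -/

import Mathlib

/-- A complete nonsingular (simplicial) fan in ℤⁿ, described combinatorially:
cones are recorded by their (finite) sets of primitive ray generators. -/
structure CompleteNonsingFan (n : ℕ) where
  rays : Finset (Fin n → ℤ)
  cones : Finset (Finset (Fin n → ℤ))
  empty_mem : ∅ ∈ cones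
  singleton_mem : ∀ ρ ∈ rays, {ρ} ∈ cones
  cone_rays : ∀ σ ∈ cones, σ ⊆ rays
  face_mem : ∀ σ ∈ cones, ∀ τ ⊆ σ, τ ∈ cones
  /-- nonsingularity: the generators of every cone form part of a ℤ-basis of ℤⁿ -/
  nonsingular : ∀ σ ∈ cones, ∃ b : Module.Basis (Fin n) ℤ (Fin n → ℤ),
      (σ : Set (Fin n → ℤ)) ⊆ Set.range ⇑b
  /-- completeness: every point of ℝⁿ lies in some cone -/
  complete : ∀ x : Fin n → ℝ, ∃ σ ∈ cones, ∃ c : (Fin n → ℤ) → ℝ,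
      (∀ v, 0 ≤ c v) ∧ x = ∑ v ∈ σ, c v • (fun i => (v i : ℝ))

/-- A primitive set: a set of rays not spanning a cone, every proper subset of
which spans a cone. -/
def IsPrimitiveSet {n : ℕ} (F : CompleteNonsingFan n) (P : Finset (Fin n → ℤ)) : Prop :=
  P ⊆ F.rays ∧ P ∉ F.cones ∧ ∀ ρ ∈ P, P.erase ρ ∈ F.cones

namespace Stmt8Aux

variable {n : ℕ}

/-- generators of a cone are ℤ-linearly independent -/
lemma cone_indep (F : CompleteNonsingFan n) {σ : Finset (Fin n → ℤ)} (hσ : σ ∈ F.cones)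
    (c : (Fin n → ℤ) → ℤ) (h : ∑ v ∈ σ, c v • v = 0) : ∀ v ∈ σ, c v = 0 := by
  obtain ⟨b, hb⟩ := F.nonsingular σ hσ
  have hind : LinearIndependent ℤ (fun x : (σ : Set (Fin n → ℤ)) => (x : Fin n → ℤ)) :=
    (b.linearIndependent.linearIndepOn_id).mono hb
  intro v hv
  have := linearIndependent_iff'.mp hind σ.attach (fun x => c x.1) ?_ ⟨v, hv⟩
    (Finset.mem_attach _ _)
  · exact this
  · rw [← h]; exact Finset.sum_attach σ (fun v => c v • v)

lemma ray_ne_zero (F : CompleteNonsingFan n) {ρ : Fin n → ℤ} (hρ : ρ ∈ F.rays) : ρ ≠ 0 := by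
  intro h0
  have h1 : ∑ v ∈ ({ρ} : Finset (Fin n → ℤ)), (1 : ℤ) • v = 0 := by
    simp [h0]
  have := cone_indep F (F.singleton_mem ρ hρ) (fun _ => (1:ℤ)) h1 ρ (Finset.mem_singleton_self ρ)
  norm_num at this

/-- any non-cone subset of the rays contains a primitive set -/
lemma exists_primitive (F : CompleteNonsingFan n) :
    ∀ T : Finset (Fin n → ℤ), T ⊆ F.rays → T ∉ F.cones →
      ∃ P, P ⊆ T ∧ IsPrimitiveSet F P := by
  intro T
  induction T using Finset.strongInductionOn with
  | _ T ih =>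
    intro hTr hTc
    by_cases h : ∀ v ∈ T, T.erase v ∈ F.cones
    · exact ⟨T, Finset.Subset.refl T, hTr, hTc, h⟩
    · push_neg at h
      obtain ⟨v, hv, hvc⟩ := h
      obtain ⟨P, hPT, hP⟩ := ih (T.erase v) (Finset.erase_ssubset hv)
        ((Finset.erase_subset v T).trans hTr) hvc
      exact ⟨P, hPT.trans (Finset.erase_subset v T), hP⟩

lemma prim_card (F : CompleteNonsingFan n) {P : Finset (Fin n → ℤ)}
    (hP : IsPrimitiveSet F P) : 2 ≤ P.card := by
  obtain ⟨hPr, hPc, _⟩ := hP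
  by_contra h
  push_neg at h
  interval_cases hc : P.card
  · rw [Finset.card_eq_zero] at hc
    exact hPc (hc ▸ F.empty_mem)
  · rw [Finset.card_eq_one] at hc
    obtain ⟨v, rfl⟩ := hc
    exact hPc (F.singleton_mem v (hPr (Finset.mem_singleton_self v)))

/-- the key impossibility: a ray cannot be a strictly positive integer combination of
the generators of a nonempty cone, with the ray outside the cone's generator set. -/
lemma cone_case (F : CompleteNonsingFan n)
    (hprim : ∀ P, IsPrimitiveSet F P → (∑ v ∈ P, v = 0 ∨ ∑ v ∈ P, v ∈ F.rays))
    (S : Finset (Fin n → ℤ)) (hS : S ∈ F.cones) (hSne : S.Nonempty) (hSr : S ⊆ F.rays)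
    (r₀ : Fin n → ℤ) (hr₀ : r₀ ∈ F.rays) (hr₀S : r₀ ∉ S) (c₀ : (Fin n → ℤ) → ℕ)
    (hc₀ : ∀ v ∈ S, 1 ≤ c₀ v) (heq₀ : r₀ = ∑ v ∈ S, (c₀ v : ℤ) • v) : False := by
  classical
  -- Expr r c
  set Expr : (Fin n → ℤ) → ((Fin n → ℤ) → ℕ) → Prop :=
    fun r c => r ∈ F.rays ∧ r ∉ S ∧ (∀ v ∈ S, 1 ≤ c v) ∧ r = ∑ v ∈ S, (c v : ℤ) • v with hExpr
  -- uniqueness of coefficients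
  have uniq : ∀ (r : Fin n → ℤ) (c d : (Fin n → ℤ) → ℕ), r = ∑ v ∈ S, (c v : ℤ) • v →
      r = ∑ v ∈ S, (d v : ℤ) • v → ∀ v ∈ S, c v = d v := by
    intro r c d hc hd v hv
    have hz : ∑ v ∈ S, ((c v : ℤ) - (d v : ℤ)) • v = 0 := by
      rw [Finset.sum_congr rfl (fun v _ => sub_smul (c v : ℤ) (d v : ℤ) v),
        Finset.sum_sub_distrib, ← hc, ← hd, sub_self]
    have h2 := cone_indep F hS _ hz v hv
    have h3 : (c v : ℤ) = d v := by linarith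
    exact_mod_cast h3
  -- the step: from one expressible ray produce one with strictly larger total
  have step : ∀ (r : Fin n → ℤ) (c : (Fin n → ℤ) → ℕ), Expr r c →
      ∃ r' c', Expr r' c' ∧ (∑ v ∈ S, c v) + 1 ≤ ∑ v ∈ S, c' v := by
    intro r c hc
    obtain ⟨hrr, hrS, hc1, hre⟩ := hc
    -- insert r S is not a cone
    have hT : insert r S ∉ F.cones := by
      intro hT
      have hz : ∑ v ∈ insert r S, ((fun v => if v = r then (1:ℤ) else -(c v : ℤ)) v) • v = 0 := by
        rw [Finset.sum_insert hrS]
        have h1 : ∑ v ∈ S, (if v = r then (1:ℤ) else -(c v : ℤ)) • v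
            = ∑ v ∈ S, -((c v : ℤ) • v) := by
          refine Finset.sum_congr rfl (fun v hv => ?_)
          rw [if_neg (by rintro rfl; exact hrS hv), neg_smul]
        rw [h1, Finset.sum_neg_distrib, ← hre]
        simp
      have := cone_indep F hT _ hz r (Finset.mem_insert_self r S)
      simp at this
    -- extract a primitive subset of insert r S
    obtain ⟨P, hPT, hP⟩ := exists_primitive F (insert r S)
      (Finset.insert_subset hrr hSr) hT
    have hrP : r ∈ P := by
      by_contra hrP
      have hPS : P ⊆ S := by
        intro v hv
        rcases Finset.mem_insert.mp (hPT hv) with rfl | h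
        · exact absurd hv hrP
        · exact h
      exact hP.2.1 (F.face_mem S hS P hPS)
    have hP'S : P.erase r ⊆ S := by
      intro v hv
      rcases Finset.mem_insert.mp (hPT (Finset.mem_of_mem_erase hv)) with rfl | h
      · exact absurd rfl (Finset.ne_of_mem_erase hv)
      · exact h
    have hP'ne : (P.erase r).Nonempty := by
      have h2 := prim_card F hP
      have : 1 ≤ (P.erase r).card := by
        rw [Finset.card_erase_of_mem hrP]; omega
      exact Finset.card_pos.mp (by omega)
    have hsplit : ∑ v ∈ P, v = r + ∑ v ∈ P.erase r, v :=
      (Finset.add_sum_erase P id hrP).symm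
    -- the new coefficients
    set d : (Fin n → ℤ) → ℕ := fun v => c v + (if v ∈ P.erase r then 1 else 0) with hd
    have hd1 : ∀ v ∈ S, 1 ≤ d v := fun v hv => le_trans (hc1 v hv) (Nat.le_add_right _ _)
    have hsum_erase : ∑ v ∈ S, ((if v ∈ P.erase r then (1:ℤ) else 0)) • v
        = ∑ v ∈ P.erase r, v := by
      have h1 : ∀ v ∈ S, ((if v ∈ P.erase r then (1:ℤ) else 0)) • v
          = (if v ∈ P.erase r then v else 0) := by
        intro v _; split <;> simp
      rw [Finset.sum_congr rfl h1, Finset.sum_ite_mem, Finset.inter_eq_right.mpr hP'S]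
    have hdsum : ∑ v ∈ S, (d v : ℤ) • v = r + ∑ v ∈ P.erase r, v := by
      have h2 : ∀ v ∈ S, (d v : ℤ) • v
          = (c v : ℤ) • v + ((if v ∈ P.erase r then (1:ℤ) else 0)) • v := by
        intro v _
        have h3 : (d v : ℤ) = (c v : ℤ) + (if v ∈ P.erase r then (1:ℤ) else 0) := by
          rw [hd]; by_cases hvp : v ∈ P.erase r <;> simp [hvp]
        rw [h3, add_smul]
      rw [Finset.sum_congr rfl h2, Finset.sum_add_distrib, hsum_erase, ← hre]
    have hdtot : ∑ v ∈ S, d v = (∑ v ∈ S, c v) + (P.erase r).card := by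
      rw [hd, Finset.sum_add_distrib]
      congr 1
      rw [Finset.sum_ite_mem, Finset.inter_eq_right.mpr hP'S, Finset.card_eq_sum_ones]
    have hcard1 : 1 ≤ (P.erase r).card := Finset.card_pos.mpr hP'ne
    have hStot : S.card ≤ ∑ v ∈ S, c v := by
      calc S.card = ∑ _v ∈ S, 1 := by simp
        _ ≤ ∑ v ∈ S, c v := Finset.sum_le_sum hc1
    have hS1 : 1 ≤ S.card := Finset.card_pos.mpr hSne
    -- apply the primitive relation hypothesis
    rcases hprim P hP with h0 | hray
    · -- sum over P is zero: contradiction with independence of S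
      exfalso
      rw [hsplit] at h0
      have hz : ∑ v ∈ S, (d v : ℤ) • v = 0 := by rw [hdsum, h0]
      obtain ⟨w, hw⟩ := hP'ne
      have h4 := cone_indep F hS _ hz w (hP'S hw)
      have h1w : 1 ≤ d w := hd1 w (hP'S hw)
      omega
    · -- sum over P is a ray r'
      set r' : Fin n → ℤ := ∑ v ∈ P, v with hr'
      have hr'e : r' = ∑ v ∈ S, (d v : ℤ) • v := by rw [hsplit, hdsum]
      have hr'S : r' ∉ S := by
        intro hmem
        have he : r' = ∑ v ∈ S, (((if v = r' then 1 else 0 : ℕ)) : ℤ) • v := by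
          have h1 : ∀ v ∈ S, (((if v = r' then 1 else 0 : ℕ)) : ℤ) • v
              = (if v = r' then v else 0) := by
            intro v _; split <;> simp
          rw [Finset.sum_congr rfl h1, Finset.sum_ite_eq' S r' (fun v => v), if_pos hmem]
        have hde := uniq r' d _ hr'e he
        have h1 : ∑ v ∈ S, d v = ∑ v ∈ S, (if v = r' then 1 else 0) :=
          Finset.sum_congr rfl hde
        have h2 : ∑ v ∈ S, (if v = r' then (1:ℕ) else 0) = 1 := by
          rw [Finset.sum_ite_eq' S r' (fun _ => 1), if_pos hmem]
        omega
      exact ⟨r', d, ⟨hray, hr'S, hd1, hr'e⟩, by omega⟩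
  -- iterate: for every t there is an expressible ray of total ≥ t
  have claim : ∀ t : ℕ, ∃ r c, Expr r c ∧ t ≤ ∑ v ∈ S, c v := by
    intro t
    induction t with
    | zero => exact ⟨r₀, c₀, ⟨hr₀, hr₀S, hc₀, heq₀⟩, Nat.zero_le _⟩
    | succ t ih =>
      obtain ⟨r, c, hc, ht⟩ := ih
      obtain ⟨r', c', hc', ht'⟩ := step r c hc
      exact ⟨r', c', hc', by omega⟩
  -- pigeonhole over the finitely many rays
  let g : (Fin n → ℤ) → ℕ := fun r =>
    if h : ∃ c, Expr r c then ∑ v ∈ S, (Classical.choose h) v else 0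
  have hg : ∀ r c, Expr r c → ∑ v ∈ S, c v = g r := by
    intro r c hc
    have hex : ∃ c, Expr r c := ⟨c, hc⟩
    simp only [g, dif_pos hex]
    exact Finset.sum_congr rfl (uniq r c _ hc.2.2.2 (Classical.choose_spec hex).2.2.2)
  obtain ⟨r, c, hc, ht⟩ := claim (F.rays.sup g + 1)
  have h1 : g r ≤ F.rays.sup g := Finset.le_sup hc.1
  have h2 := hg r c hc
  omega

lemma main_aux (F : CompleteNonsingFan n)
    (hprim : ∀ P, IsPrimitiveSet F P → (∑ v ∈ P, v = 0 ∨ ∑ v ∈ P, v ∈ F.rays))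
    (ρ : Fin n → ℤ) (hρ : ρ ∈ F.rays) :
    ∀ N (a : (Fin n → ℤ) → ℕ), (∑ v ∈ F.rays.erase ρ, a v) = N →
      ρ = ∑ v ∈ F.rays.erase ρ, (a v : ℤ) • v → (∃ v ∈ F.rays.erase ρ, 0 < a v) →
      ∃ P, IsPrimitiveSet F P ∧ ∑ v ∈ P, v = ρ := by
  intro N
  induction N using Nat.strong_induction_on with
  | _ N ih =>
  intro a hN hcomb hnt
  classical
  set E := F.rays.erase ρ with hE
  set S := E.filter (fun v => 0 < a v) with hSdef
  have hSE : S ⊆ E := Finset.filter_subset _ _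
  have hSr : S ⊆ F.rays := hSE.trans (Finset.erase_subset ρ F.rays)
  have hρS : ρ ∉ S := fun h => (Finset.ne_of_mem_erase (hSE h)) rfl
  have hSpos : ∀ v ∈ S, 1 ≤ a v := fun v hv => (Finset.mem_filter.mp hv).2
  have hSne : S.Nonempty := by
    obtain ⟨v, hv, hp⟩ := hnt
    exact ⟨v, Finset.mem_filter.mpr ⟨hv, hp⟩⟩
  have hcombS : ρ = ∑ v ∈ S, (a v : ℤ) • v := by
    rw [hcomb]
    refine (Finset.sum_subset hSE (fun v hv hvs => ?_)).symm
    have hz : a v = 0 := by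
      by_contra h
      exact hvs (Finset.mem_filter.mpr ⟨hv, Nat.pos_of_ne_zero h⟩)
    simp [hz]
  by_cases hSc : S ∈ F.cones
  · exact (cone_case F hprim S hSc hSne hSr ρ hρ hρS a hSpos hcombS).elim
  obtain ⟨P, hPS, hP⟩ := exists_primitive F S hSr hSc
  have hPE : P ⊆ E := hPS.trans hSE
  have hPcard := prim_card F hP
  have hindE : ∑ v ∈ E, (if v ∈ P then (1:ℤ) else 0) • v = ∑ v ∈ P, v := by
    have h1 : ∀ v ∈ E, (if v ∈ P then (1:ℤ) else 0) • v = (if v ∈ P then v else 0) := by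
      intro v _; split <;> simp
    rw [Finset.sum_congr rfl h1, Finset.sum_ite_mem, Finset.inter_eq_right.mpr hPE]
  have hindN : ∑ v ∈ E, (if v ∈ P then (1:ℕ) else 0) = P.card := by
    rw [Finset.sum_ite_mem, Finset.inter_eq_right.mpr hPE, Finset.card_eq_sum_ones]
  rcases hprim P hP with h0 | hray
  · -- the primitive relation sums to zero: decrease the total coefficient sum
    set a' : (Fin n → ℤ) → ℕ := fun v => a v - (if v ∈ P then 1 else 0) with ha'
    have hcast : ∀ v ∈ E, (a' v : ℤ) = (a v : ℤ) - (if v ∈ P then (1:ℤ) else 0) := by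
      intro v hv
      rw [ha']
      by_cases hvp : v ∈ P
      · have := hSpos v (hPS hvp)
        simp only [hvp, if_true]
        omega
      · simp [hvp]
    have hcomb' : ρ = ∑ v ∈ E, (a' v : ℤ) • v := by
      have h2 : ∀ v ∈ E, (a' v : ℤ) • v
          = (a v : ℤ) • v - (if v ∈ P then (1:ℤ) else 0) • v := by
        intro v hv; rw [hcast v hv, sub_smul]
      rw [Finset.sum_congr rfl h2, Finset.sum_sub_distrib, hindE, h0, sub_zero, ← hcomb]
    have htot : (∑ v ∈ E, a' v) + P.card = N := by
      rw [← hN, ← hindN, ← Finset.sum_add_distrib]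
      refine Finset.sum_congr rfl (fun v hv => ?_)
      rw [ha']
      by_cases hvp : v ∈ P
      · have := hSpos v (hPS hvp)
        simp only [hvp, if_true]
        omega
      · simp [hvp]
    have hnt' : ∃ v ∈ E, 0 < a' v := by
      by_contra h
      push_neg at h
      have hz : ρ = 0 := by
        rw [hcomb']
        refine Finset.sum_eq_zero (fun v hv => ?_)
        have h3 : a' v = 0 := by have := h v hv; omega
        simp [h3]
      exact ray_ne_zero F hρ hz
    exact ih (∑ v ∈ E, a' v) (by omega) a' rfl hcomb' hnt'
  · -- the primitive relation sums to a ray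
    by_cases hreq : ∑ v ∈ P, v = ρ
    · exact ⟨P, hP, hreq⟩
    set r' := ∑ v ∈ P, v with hr'
    have hr'E : r' ∈ E := Finset.mem_erase.mpr ⟨hreq, hray⟩
    set a' : (Fin n → ℤ) → ℕ :=
      fun v => (a v - (if v ∈ P then 1 else 0)) + (if v = r' then 1 else 0) with ha'
    have hcast : ∀ v ∈ E, (a' v : ℤ)
        = ((a v : ℤ) - (if v ∈ P then (1:ℤ) else 0)) + (if v = r' then (1:ℤ) else 0) := by
      intro v hv
      simp only [ha']
      by_cases hvp : v ∈ P
      · have h1 := hSpos v (hPS hvp)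
        split_ifs <;> omega
      · split_ifs <;> omega
    have hindr : ∑ v ∈ E, (if v = r' then (1:ℤ) else 0) • v = r' := by
      have h1 : ∀ v ∈ E, (if v = r' then (1:ℤ) else 0) • v = (if v = r' then v else 0) := by
        intro v _; split <;> simp
      rw [Finset.sum_congr rfl h1, Finset.sum_ite_eq' E r' (fun v => v), if_pos hr'E]
    have hindNr : ∑ v ∈ E, (if v = r' then (1:ℕ) else 0) = 1 := by
      rw [Finset.sum_ite_eq' E r' (fun _ => 1), if_pos hr'E]
    have hcomb' : ρ = ∑ v ∈ E, (a' v : ℤ) • v := by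
      have h2 : ∀ v ∈ E, (a' v : ℤ) • v
          = ((a v : ℤ) • v - (if v ∈ P then (1:ℤ) else 0) • v)
            + (if v = r' then (1:ℤ) else 0) • v := by
        intro v hv; rw [hcast v hv, add_smul, sub_smul]
      rw [Finset.sum_congr rfl h2, Finset.sum_add_distrib, Finset.sum_sub_distrib,
        hindE, hindr, ← hcomb]
      abel
    have htot : (∑ v ∈ E, a' v) + P.card = N + 1 := by
      rw [← hN, ← hindN, ← hindNr, ← Finset.sum_add_distrib, ← Finset.sum_add_distrib]
      refine Finset.sum_congr rfl (fun v hv => ?_)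
      rw [ha']
      by_cases hvp : v ∈ P
      · have := hSpos v (hPS hvp)
        simp only [hvp, if_true]
        omega
      · simp only [hvp, if_false]
        omega
    have hnt' : ∃ v ∈ E, 0 < a' v := by
      refine ⟨r', hr'E, ?_⟩
      rw [ha']
      simp
    exact ih (∑ v ∈ E, a' v) (by omega) a' rfl hcomb' hnt'

end Stmt8Aux

theorem stmt_8 (n : ℕ) (F : CompleteNonsingFan n)
    (hprim : ∀ P, IsPrimitiveSet F P → (∑ v ∈ P, v = 0 ∨ ∑ v ∈ P, v ∈ F.rays))
    (ρ : Fin n → ℤ) (hρ : ρ ∈ F.rays)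
    (a : (Fin n → ℤ) → ℕ)
    (hcomb : ρ = ∑ v ∈ F.rays.erase ρ, (a v : ℤ) • v)
    (hnontriv : ∃ v ∈ F.rays.erase ρ, 0 < a v) :
    ∃ P, IsPrimitiveSet F P ∧ ∑ v ∈ P, v = ρ :=
  Stmt8Aux.main_aux F hprim ρ hρ (∑ v ∈ F.rays.erase ρ, a v) a rfl hcomb hnontriv
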